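/- Let f : ℝ → ℝ be continuous on [0,1] and define y : [0,1] → ℝ by y(x) := −2·[(1 − √x)·∫₀ˣ f(t)·√t dt + √x·∫ₓ¹ f(t)·(1 − √t) dt]. Then y(0) = 0, y(1) = 0, y is differentiable on (0,1), the function x ↦ √x · y′(x) is differentiable on (0,1), and its derivative satisfies d/dx (√x · y′(x)) = f(x) for every x ∈ (0,1). In other words, y solves the singular boundary value problem D(√x · D y)(x) = f(x) on (0,1) with y(0) = y(1) = 0. -/

import Mathlib

/-- The function `y(x) = −2·[(1−√x)·∫₀ˣ f(t)·√t dt + √x·∫ₓ¹ f(t)·(1−√t) dt]` solves the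
singular boundary value problem `D(√x · D y)(x) = f(x)` on `(0,1)` with `y(0) = y(1) = 0`. -/
theorem stmt_1 (f : ℝ → ℝ) (hf : ContinuousOn f (Set.Icc 0 1))
    (y : ℝ → ℝ)
    (hy : y = fun x => -2 * ((1 - Real.sqrt x) * (∫ t in (0:ℝ)..x, f t * Real.sqrt t) +
      Real.sqrt x * ∫ t in x..(1:ℝ), f t * (1 - Real.sqrt t))) :
    y 0 = 0 ∧ y 1 = 0 ∧
      (∀ x ∈ Set.Ioo (0:ℝ) 1, DifferentiableAt ℝ y x) ∧
      (∀ x ∈ Set.Ioo (0:ℝ) 1,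
        DifferentiableAt ℝ (fun t => Real.sqrt t * deriv y t) x ∧
        deriv (fun t => Real.sqrt t * deriv y t) x = f x) := by
  set g1 : ℝ → ℝ := fun t => f t * Real.sqrt t with hg1def
  set g2 : ℝ → ℝ := fun t => f t * (1 - Real.sqrt t) with hg2def
  have hg1c : ContinuousOn g1 (Set.Icc 0 1) :=
    hf.mul (Real.continuous_sqrt.continuousOn)
  have hg2c : ContinuousOn g2 (Set.Icc 0 1) :=
    hf.mul (continuousOn_const.sub Real.continuous_sqrt.continuousOn)
  -- A and B
  set A : ℝ → ℝ := fun x => ∫ t in (0:ℝ)..x, g1 t with hAdef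
  set B : ℝ → ℝ := fun x => ∫ t in x..(1:ℝ), g2 t with hBdef
  have hIoo : Set.Ioo (0:ℝ) 1 ⊆ Set.Icc 0 1 := Set.Ioo_subset_Icc_self
  -- derivative facts on Ioo
  have hA : ∀ x ∈ Set.Ioo (0:ℝ) 1, HasDerivAt A (g1 x) x := by
    intro x hx
    refine intervalIntegral.integral_hasDerivAt_right
      ((hg1c.mono (by
        rw [Set.uIcc_of_le (le_of_lt hx.1)]
        exact Set.Icc_subset_Icc le_rfl (le_of_lt hx.2))).intervalIntegrable)
      ((hg1c.mono hIoo).stronglyMeasurableAtFilter isOpen_Ioo x hx)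
      ((hg1c.mono hIoo).continuousAt (isOpen_Ioo.mem_nhds hx))
  have hB : ∀ x ∈ Set.Ioo (0:ℝ) 1, HasDerivAt B (-g2 x) x := by
    intro x hx
    refine intervalIntegral.integral_hasDerivAt_left
      ((hg2c.mono (by
        rw [Set.uIcc_of_le (le_of_lt hx.2)]
        exact Set.Icc_subset_Icc (le_of_lt hx.1) le_rfl)).intervalIntegrable)
      ((hg2c.mono hIoo).stronglyMeasurableAtFilter isOpen_Ioo x hx)
      ((hg2c.mono hIoo).continuousAt (isOpen_Ioo.mem_nhds hx))
  have hsq : ∀ x ∈ Set.Ioo (0:ℝ) 1, HasDerivAt Real.sqrt (1 / (2 * Real.sqrt x)) x := by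
    intro x hx
    exact Real.hasDerivAt_sqrt (ne_of_gt hx.1)
  have hyd : ∀ x ∈ Set.Ioo (0:ℝ) 1,
      HasDerivAt y ((A x - B x) / Real.sqrt x) x := by
    intro x hx
    have hs := hsq x hx
    have hA' := hA x hx
    have hB' := hB x hx
    have hsx : Real.sqrt x ≠ 0 := Real.sqrt_ne_zero'.mpr hx.1
    have h : HasDerivAt y
        (-2 * (((0 - 1 / (2 * Real.sqrt x)) * A x + (1 - Real.sqrt x) * g1 x)
          + (1 / (2 * Real.sqrt x) * B x + Real.sqrt x * (-g2 x)))) x := by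
      rw [hy]
      exact (((((hasDerivAt_const x (1:ℝ)).sub hs).mul hA').add (hs.mul hB')).const_mul (-2))
    convert h using 1
    simp only [hg1def, hg2def]
    field_simp
    ring
  refine ⟨by simp [hy], by simp [hy], fun x hx => (hyd x hx).differentiableAt, ?_⟩
  intro x hx
  -- the function √t * deriv y t equals A - B on Ioo 0 1
  have heq : (fun t => Real.sqrt t * deriv y t) =ᶠ[nhds x] (fun t => A t - B t) := by
    filter_upwards [isOpen_Ioo.mem_nhds hx] with t ht
    have hst : Real.sqrt t ≠ 0 := Real.sqrt_ne_zero'.mpr ht.1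
    rw [(hyd t ht).deriv]
    field_simp
  have hAB : HasDerivAt (fun t => A t - B t) (f x) x := by
    have := (hA x hx).sub (hB x hx)
    convert this using 1
    · rfl
    · rfl
    · rfl
    · simp only [hg1def, hg2def]; ring
  constructor
  · exact (hAB.differentiableAt).congr_of_eventuallyEq heq
  · rw [heq.deriv_eq, hAB.deriv]
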